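/- Let x ∈ ℝ^n satisfy xᵀ(AΓAᵀ + Σ)^{-1}x ≤ r with Γ ⪰ 0, Σ ≻ 0, r > 0. Define y = Γ^{1/2} Aᵀ (AΓAᵀ + Σ)^{-1} x and w = Σ^{1/2} (AΓAᵀ + Σ)^{-1} x. Then A Γ^{1/2} y + Σ^{1/2} w = x, yᵀy ≤ r, and wᵀw ≤ r. -/

import Mathlib

open Matrix

open scoped ComplexOrder in
/-- The square root of a positive semidefinite matrix, as defined in the older Mathlib
(`Matrix.PosSemidef.sqrt`, removed since). -/
noncomputable def Matrix.PosSemidef.sqrt {n 𝕜 : Type*} [Fintype n] [DecidableEq n] [RCLike 𝕜]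
    {A : Matrix n n 𝕜} (hA : A.PosSemidef) : Matrix n n 𝕜 :=
  (hA.1.eigenvectorUnitary : Matrix n n 𝕜) * diagonal ((↑) ∘ (√·) ∘ hA.1.eigenvalues) *
    (star hA.1.eigenvectorUnitary : Matrix n n 𝕜)

lemma Matrix.PosSemidef.sqrt_mul_self {n : Type*} [Fintype n] [DecidableEq n]
    {A : Matrix n n ℝ} (hA : A.PosSemidef) : hA.sqrt * hA.sqrt = A := by
  unfold Matrix.PosSemidef.sqrt
  have hU : (star hA.1.eigenvectorUnitary : Matrix n n ℝ) * hA.1.eigenvectorUnitary = 1 :=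
    Unitary.coe_star_mul_self _
  conv_rhs => rw [hA.1.spectral_theorem, Unitary.conjStarAlgAut_apply]
  rw [show ∀ U D V : Matrix n n ℝ, U * D * V * (U * D * V) = U * (D * (V * U) * D) * V by
    intro U D V; simp only [Matrix.mul_assoc], hU, Matrix.mul_one, diagonal_mul_diagonal]
  congr 2
  ext i j
  by_cases h : i = j <;> simp [diagonal_apply, h, Real.mul_self_sqrt (hA.eigenvalues_nonneg j)]

lemma Matrix.PosSemidef.sqrt_transpose {n : Type*} [Fintype n] [DecidableEq n]
    {A : Matrix n n ℝ} (hA : A.PosSemidef) : (hA.sqrt)ᵀ = hA.sqrt := by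
  unfold Matrix.PosSemidef.sqrt
  rw [← conjTranspose_eq_transpose_of_trivial, conjTranspose_mul, conjTranspose_mul,
    diagonal_conjTranspose]
  simp [Matrix.mul_assoc, Matrix.star_eq_conjTranspose, conjTranspose_eq_transpose_of_trivial]

private lemma sqrt_dot {n : ℕ} {B S : Matrix (Fin n) (Fin n) ℝ}
    (hS : Sᵀ = S) (hSS : S * S = B) (u : Fin n → ℝ) :
    (S *ᵥ u) ⬝ᵥ (S *ᵥ u) = u ⬝ᵥ (B *ᵥ u) := by
  rw [dotProduct_mulVec, vecMul_mulVec, hS, hSS, ← dotProduct_mulVec]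

/-- explicit decomposition `x = A Γ^{1/2} y + Σ^{1/2} w` with
`yᵀy ≤ r` and `wᵀw ≤ r`, for `xᵀ (A Γ Aᵀ + Σ)⁻¹ x ≤ r`. -/
theorem stmt_19 {n : ℕ} (A Γ Sig : Matrix (Fin n) (Fin n) ℝ)
    (hΓ : Γ.PosSemidef) (hSig : Sig.PosDef) (r : ℝ) (hr : 0 < r)
    (x : Fin n → ℝ)
    (hx : x ⬝ᵥ (A * Γ * Aᵀ + Sig)⁻¹ *ᵥ x ≤ r)
    (y w : Fin n → ℝ)
    (hy : y = (hΓ.sqrt * Aᵀ * (A * Γ * Aᵀ + Sig)⁻¹) *ᵥ x)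
    (hw : w = (hSig.posSemidef.sqrt * (A * Γ * Aᵀ + Sig)⁻¹) *ᵥ x) :
    A *ᵥ (hΓ.sqrt *ᵥ y) + hSig.posSemidef.sqrt *ᵥ w = x ∧
      y ⬝ᵥ y ≤ r ∧ w ⬝ᵥ w ≤ r := by
  set M : Matrix (Fin n) (Fin n) ℝ := A * Γ * Aᵀ + Sig with hMdef
  have hAΓ : (A * Γ * Aᵀ).PosSemidef := by
    have h := hΓ.mul_mul_conjTranspose_same A
    rwa [conjTranspose_eq_transpose_of_trivial] at h
  have hMpd : M.PosDef := Matrix.PosDef.of_dotProduct_mulVec_pos (hAΓ.1.add hSig.1) fun z hz => by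
    rw [add_mulVec, dotProduct_add]
    exact add_pos_of_nonneg_of_pos (hAΓ.dotProduct_mulVec_nonneg z) (hSig.dotProduct_mulVec_pos hz)
  have hdet : IsUnit M.det := hMpd.det_pos.ne'.isUnit
  have hMM : M * M⁻¹ = 1 := mul_nonsing_inv _ hdet
  set v : Fin n → ℝ := M⁻¹ *ᵥ x with hv
  have hSG : (hΓ.sqrt)ᵀ = hΓ.sqrt := hΓ.sqrt_transpose
  have hSS2 : (hSig.posSemidef.sqrt)ᵀ = hSig.posSemidef.sqrt := by
    exact hSig.posSemidef.sqrt_transpose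
  have hy' : y = hΓ.sqrt *ᵥ (Aᵀ *ᵥ v) := by
    rw [hy, hv, Matrix.mul_assoc, ← mulVec_mulVec, ← mulVec_mulVec]
  have hw' : w = hSig.posSemidef.sqrt *ᵥ v := by
    rw [hw, hv, ← mulVec_mulVec]
  have h1 : A *ᵥ (hΓ.sqrt *ᵥ y) + hSig.posSemidef.sqrt *ᵥ w = x := by
    rw [hy, hw]
    rw [mulVec_mulVec, mulVec_mulVec, mulVec_mulVec, ← add_mulVec]
    have key : A * hΓ.sqrt * (hΓ.sqrt * Aᵀ * M⁻¹) +
        hSig.posSemidef.sqrt * (hSig.posSemidef.sqrt * M⁻¹) =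
        (A * (hΓ.sqrt * hΓ.sqrt) * Aᵀ + hSig.posSemidef.sqrt * hSig.posSemidef.sqrt) * M⁻¹ := by
      noncomm_ring
    rw [key, hΓ.sqrt_mul_self, hSig.posSemidef.sqrt_mul_self, ← hMdef, hMM, one_mulVec]
  have step : ∀ u : Fin n → ℝ, (Aᵀ *ᵥ u) ⬝ᵥ (Γ *ᵥ (Aᵀ *ᵥ u)) = u ⬝ᵥ ((A * Γ * Aᵀ) *ᵥ u) := by
    intro u
    have hAu : Aᵀ *ᵥ u = u ᵥ* A := by rw [← vecMul_transpose, transpose_transpose]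
    rw [mulVec_mulVec, hAu, dotProduct_mulVec, vecMul_vecMul, dotProduct_mulVec,
      Matrix.mul_assoc]
  have hy2 : y ⬝ᵥ y = v ⬝ᵥ ((A * Γ * Aᵀ) *ᵥ v) := by
    rw [hy', sqrt_dot hSG hΓ.sqrt_mul_self, step]
  have hw2 : w ⬝ᵥ w = v ⬝ᵥ (Sig *ᵥ v) := by
    rw [hw', sqrt_dot hSS2 hSig.posSemidef.sqrt_mul_self]
  have hsum : y ⬝ᵥ y + w ⬝ᵥ w = x ⬝ᵥ M⁻¹ *ᵥ x := by
    rw [hy2, hw2, ← dotProduct_add, ← add_mulVec, ← hMdef, hv, mulVec_mulVec, hMM,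
      one_mulVec, dotProduct_comm]
  have hynn : 0 ≤ y ⬝ᵥ y := Finset.sum_nonneg fun i _ => mul_self_nonneg (y i)
  have hwnn : 0 ≤ w ⬝ᵥ w := Finset.sum_nonneg fun i _ => mul_self_nonneg (w i)
  refine ⟨h1, ?_, ?_⟩
  · linarith [hsum, hx]
  · linarith [hsum, hx]
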